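/- Under the hypotheses of the nonmonotone Armijo scheme (with $\varphi$ bounded from below on the sublevel set $\{w \in D : \varphi(w) \le \varphi(w^0)\}$ and uniformly continuous there, $\gamma_j \ge \gamma_{\min} > 0$), the iterates satisfy $\|w^{j+1} - w^j\| \to 0$ as $j \to \infty$. -/

import Mathlib

open Filter Topology

private lemma aux_sqz {a b : ℕ → ℝ} {c : ℝ} (hc : 0 < c) (ha : ∀ j, 0 ≤ a j)
    (hle : ∀ᶠ j in atTop, c * a j ^ 2 ≤ b j) (hb : Tendsto b atTop (𝓝 0)) :
    Tendsto a atTop (𝓝 0) := by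
  have h2 : Tendsto (fun j => a j ^ 2) atTop (𝓝 0) := by
    have hbc : Tendsto (fun j => b j / c) atTop (𝓝 0) := by
      simpa using hb.div_const c
    refine squeeze_zero' (Eventually.of_forall fun j => sq_nonneg _) ?_ hbc
    filter_upwards [hle] with j hj
    rw [le_div_iff₀ hc]; linarith
  have h3 := (Real.continuous_sqrt.tendsto 0).comp h2
  simp only [Function.comp_def, Real.sqrt_zero] at h3
  exact h3.congr fun j => Real.sqrt_sq (ha j)

private lemma aux_uc {E : Type*} [NormedAddCommGroup E] {φ : E → ℝ} {S : Set E}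
    (hUC : UniformContinuousOn φ S) {x y : ℕ → E} (hx : ∀ j, x j ∈ S) (hy : ∀ j, y j ∈ S)
    (h : Tendsto (fun j => ‖x j - y j‖) atTop (𝓝 0)) :
    Tendsto (fun j => φ (x j) - φ (y j)) atTop (𝓝 0) := by
  rw [Metric.uniformContinuousOn_iff] at hUC
  rw [Metric.tendsto_atTop] at h ⊢
  intro ε hε
  obtain ⟨δ, hδ, hd⟩ := hUC ε hε
  obtain ⟨N, hN⟩ := h δ hδ
  refine ⟨N, fun j hj => ?_⟩
  have h1 := hN j hj
  rw [Real.dist_eq, sub_zero, abs_of_nonneg (norm_nonneg _)] at h1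
  have h2 := hd (x j) (hx j) (y j) (hy j) (by rw [dist_eq_norm]; exact h1)
  rw [Real.dist_eq] at h2
  rw [Real.dist_eq, sub_zero]
  exact h2

theorem stmt_14 {E : Type*} [NormedAddCommGroup E] [InnerProductSpace ℝ E]
    [FiniteDimensional ℝ E]
    (D : Set E) (hDcl : IsClosed D)
    (φ : E → ℝ) (hφ : ContDiff ℝ 1 φ)
    (w : ℕ → E) (hw : ∀ j, w j ∈ D)
    (m : ℕ) (σ : ℝ) (hσ : 0 < σ ∧ σ < 1)
    (γ : ℕ → ℝ) (γmin : ℝ) (hγmin : 0 < γmin) (hγ : ∀ j, γmin ≤ γ j)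
    (hbdd : BddBelow (φ '' {x | x ∈ D ∧ φ x ≤ φ (w 0)}))
    (hUC : UniformContinuousOn φ {x | x ∈ D ∧ φ x ≤ φ (w 0)})
    (harm : ∀ j, φ (w (j + 1)) ≤
      ((Finset.range (min j m + 1)).sup'
        (Finset.nonempty_range_iff.mpr (Nat.succ_ne_zero _))
        fun r => φ (w (j - r))) +
      σ * (inner ℝ (gradient φ (w j)) (w (j + 1) - w j) : ℝ))
    (hdesc : ∀ j, (inner ℝ (gradient φ (w j)) (w (j + 1) - w j) : ℝ) ≤
      -(γ j / 2) * ‖w (j + 1) - w j‖ ^ 2) :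
    Filter.Tendsto (fun j => ‖w (j + 1) - w j‖) Filter.atTop (nhds 0) := by
  obtain ⟨hσ0, hσ1⟩ := hσ
  set S : Set E := {x | x ∈ D ∧ φ x ≤ φ (w 0)} with hS
  set M : ℕ → ℝ := fun j => (Finset.range (min j m + 1)).sup'
      (Finset.nonempty_range_iff.mpr (Nat.succ_ne_zero _)) (fun r => φ (w (j - r))) with hMdef
  have hMeq : ∀ j, M j = (Finset.range (min j m + 1)).sup'
      (Finset.nonempty_range_iff.mpr (Nat.succ_ne_zero _)) (fun r => φ (w (j - r))) :=
    fun j => rfl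
  set c : ℝ := σ * (γmin / 2) with hcdef
  have hc0 : 0 < c := by positivity
  -- key inequality
  have key : ∀ j, φ (w (j + 1)) + c * ‖w (j + 1) - w j‖ ^ 2 ≤ M j := by
    intro j
    have h1 := harm j
    rw [← hMeq j] at h1
    have h2 := hdesc j
    have h3 : σ * (inner ℝ (gradient φ (w j)) (w (j + 1) - w j) : ℝ) ≤
        -(c * ‖w (j + 1) - w j‖ ^ 2) := by
      have h4 := hγ j
      rw [hcdef]
      nlinarith [mul_le_mul_of_nonneg_left h2 hσ0.le,
        mul_nonneg (mul_nonneg hσ0.le (sub_nonneg.mpr h4)) (sq_nonneg ‖w (j + 1) - w j‖)]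
    linarith
  have hφleM : ∀ j, φ (w j) ≤ M j := by
    intro j
    have h0 : (0 : ℕ) ∈ Finset.range (min j m + 1) := Finset.mem_range.mpr (Nat.succ_pos _)
    have := Finset.le_sup' (fun r => φ (w (j - r))) h0
    rw [← hMeq j] at this
    simpa using this
  have hMmono : ∀ j, M (j + 1) ≤ M j := by
    intro j
    rw [hMeq (j + 1)]
    apply Finset.sup'_le
    intro r hr
    rw [Finset.mem_range] at hr
    rcases Nat.eq_zero_or_pos r with h0 | hpos
    · subst h0
      simp only [Nat.sub_zero]
      have h1 := key j
      nlinarith [mul_nonneg hc0.le (sq_nonneg ‖w (j + 1) - w j‖)]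
    · have hr1 : r - 1 ∈ Finset.range (min j m + 1) := by
        rw [Finset.mem_range]; omega
      have h1 := Finset.le_sup' (fun r => φ (w (j - r))) hr1
      rw [← hMeq j] at h1
      have heq : j + 1 - r = j - (r - 1) := by omega
      rw [heq]
      exact h1
  have hMante : Antitone M := antitone_nat_of_succ_le hMmono
  have hM0 : M 0 = φ (w 0) := by rw [hMeq 0]; simp
  have hwS : ∀ j, w j ∈ S := fun j =>
    ⟨hw j, (hφleM j).trans ((hMante (Nat.zero_le j)).trans_eq hM0)⟩
  -- choice of argmax index
  have hex : ∀ j, ∃ r, r ≤ min j m ∧ M j = φ (w (j - r)) := by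
    intro j
    obtain ⟨i, hi, hieq⟩ := Finset.exists_mem_eq_sup'
      (Finset.nonempty_range_iff.mpr (Nat.succ_ne_zero (min j m)))
      (fun r => φ (w (j - r)))
    refine ⟨i, ?_, by rw [hMeq j]; exact hieq⟩
    have := Finset.mem_range.mp hi; omega
  choose ρ hρle hρeq using hex
  set ℓ : ℕ → ℕ := fun j => j - ρ j with hℓdef
  have hℓ1 : ∀ j, j ≤ ℓ j + m := by intro j; have := hρle j; simp only [hℓdef]; omega
  have hℓ2 : ∀ j, ℓ j ≤ j := fun j => Nat.sub_le _ _
  have hℓ3 : ∀ j, M j = φ (w (ℓ j)) := fun j => hρeq j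
  -- boundedness and limit of M
  obtain ⟨B, hB⟩ := hbdd
  have hMbdd : BddBelow (Set.range M) := by
    refine ⟨B, ?_⟩
    rintro x ⟨j, rfl⟩
    rw [hℓ3 j]
    exact hB ⟨w (ℓ j), hwS (ℓ j), rfl⟩
  set Mstar : ℝ := ⨅ j, M j with hMstardef
  have hMtend : Tendsto M atTop (𝓝 Mstar) := tendsto_atTop_ciInf hMante hMbdd
  -- main induction
  have main : ∀ k, Tendsto (fun j => φ (w (ℓ j - k))) atTop (𝓝 Mstar) := by
    intro k
    induction k with
    | zero =>
      have : (fun j => φ (w (ℓ j - 0))) = M := by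
        funext j; rw [Nat.sub_zero, ← hℓ3 j]
      rw [this]; exact hMtend
    | succ k IH =>
      set i : ℕ → ℕ := fun j => ℓ j - (k + 1) with hidef
      have hitop : Tendsto i atTop atTop := by
        rw [tendsto_atTop]
        intro b
        filter_upwards [eventually_ge_atTop (b + m + k + 1)] with j hj
        have := hℓ1 j; simp only [hidef]; omega
      have hieq : ∀ᶠ j in atTop, i j + 1 = ℓ j - k := by
        filter_upwards [eventually_ge_atTop (m + k + 1)] with j hj
        have := hℓ1 j; simp only [hidef]; omega
      have hMi : Tendsto (fun j => M (i j)) atTop (𝓝 Mstar) := hMtend.comp hitop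
      have hφi1 : Tendsto (fun j => φ (w (i j + 1))) atTop (𝓝 Mstar) := by
        apply IH.congr'
        filter_upwards [hieq] with j hj
        rw [hj]
      have hrhs : Tendsto (fun j => M (i j) - φ (w (i j + 1))) atTop (𝓝 0) := by
        simpa using hMi.sub hφi1
      have hd : Tendsto (fun j => ‖w (i j + 1) - w (i j)‖) atTop (𝓝 0) :=
        aux_sqz hc0 (fun j => norm_nonneg _)
          (Eventually.of_forall fun j => by linarith [key (i j)]) hrhs
      have hdiff : Tendsto (fun j => φ (w (i j)) - φ (w (i j + 1))) atTop (𝓝 0) := by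
        apply aux_uc hUC (fun j => hwS (i j)) (fun j => hwS (i j + 1))
        have : (fun j => ‖w (i j) - w (i j + 1)‖) =
            fun j => ‖w (i j + 1) - w (i j)‖ := funext fun j => norm_sub_rev _ _
        rw [this]; exact hd
      have : Tendsto (fun j => φ (w (i j))) atTop (𝓝 Mstar) := by
        have := hdiff.add hφi1
        simpa using this
      exact this
  -- φ (w j) → Mstar
  have hφtend : Tendsto (fun j => φ (w j)) atTop (𝓝 Mstar) := by
    rw [Metric.tendsto_atTop]
    intro ε hε
    have H : ∀ᶠ j in atTop, ∀ k ∈ Finset.range (m + 1),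
        dist (φ (w (ℓ j - k))) Mstar < ε := by
      rw [eventually_all_finset]
      intro k _
      obtain ⟨N, hN⟩ := Metric.tendsto_atTop.mp (main k) ε hε
      exact eventually_atTop.mpr ⟨N, hN⟩
    obtain ⟨N, hN⟩ := eventually_atTop.mp H
    refine ⟨N, fun j hj => ?_⟩
    have h1 := hN (j + m) (by omega)
    have hk : ℓ (j + m) - j ∈ Finset.range (m + 1) := by
      rw [Finset.mem_range]; have := hℓ2 (j + m); omega
    have h2 := h1 _ hk
    have heq : ℓ (j + m) - (ℓ (j + m) - j) = j := by
      have := hℓ1 (j + m); have := hℓ2 (j + m); omega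
    rw [heq] at h2
    exact h2
  have hφ1 : Tendsto (fun j => φ (w (j + 1))) atTop (𝓝 Mstar) :=
    hφtend.comp (tendsto_add_atTop_nat 1)
  have hrhs : Tendsto (fun j => M j - φ (w (j + 1))) atTop (𝓝 0) := by
    simpa using hMtend.sub hφ1
  exact aux_sqz hc0 (fun j => norm_nonneg _)
    (Eventually.of_forall fun j => by linarith [key j]) hrhs
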